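/- Let θ = Θ_S ∘ Λ_{π,t} be an automorphism of B_k, let σ_θ be the permutation of {1,…,2^k} such that (Φ_k(θ(a)))_i = ((Φ_k(a))_{σ_θ^{−1}(i)})^{p^t} for all a ∈ B_k, and let m be the order of σ_θ. Then a B_k-submodule C of B_k^n is θ-cyclic if and only if there exist F_{p^r}-linear codes C_1,…,C_{2^k} ⊆ F_{p^r}^n such that C = Ψ̄_k^{−1}(C_1,…,C_{2^k}) and T_{φ^t}(C_i) ⊆ C_{σ_θ(i)} for every i, where φ is the Frobenius α ↦ α^p of F_{p^r} and T_{φ^t}(c_0,…,c_{n−1}) = (φ^t(c_{n−1}), φ^t(c_0), …, φ^t(c_{n−2})). In that case each C_i is closed under (T_{φ^t})^m, i.e., each C_i is a quasi-φ^{tm}-cyclic code of index m over F_{p^r}. -/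

import Mathlib

open MvPolynomial

set_option synthInstance.maxHeartbeats 400000
set_option maxHeartbeats 1000000

noncomputable def relIdeal (p r k : ℕ) [Fact p.Prime] : Ideal (MvPolynomial (Fin k) (GaloisField p r)) :=
  Ideal.span (Set.range fun i : Fin k => X i ^ 2 - X i)

abbrev B (p r k : ℕ) [Fact p.Prime] :=
  MvPolynomial (Fin k) (GaloisField p r) ⧸ relIdeal p r k

noncomputable def v (p r k : ℕ) [Fact p.Prime] (i : Fin k) : B p r k :=
  Ideal.Quotient.mk _ (X i)

lemma v_idem (p r k : ℕ) [Fact p.Prime] (i : Fin k) : v p r k i ^ 2 = v p r k i := by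
  have h : (X i ^ 2 - X i : MvPolynomial (Fin k) (GaloisField p r)) ∈ relIdeal p r k :=
    Ideal.subset_span ⟨i, rfl⟩
  have h2 := (Ideal.Quotient.eq_zero_iff_mem).mpr h
  rw [map_sub, map_pow] at h2
  have h3 := sub_eq_zero.mp h2
  simpa [v] using h3

lemma one_sub_v_idem (p r k : ℕ) [Fact p.Prime] (i : Fin k) :
    (1 - v p r k i) ^ 2 = 1 - v p r k i := by
  have h : (1 - v p r k i) ^ 2 = 1 - 2 * v p r k i + v p r k i ^ 2 := by ring
  rw [h, v_idem]; ring

noncomputable def ThAux (p r k : ℕ) [Fact p.Prime] (S : Finset (Fin k)) :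
    MvPolynomial (Fin k) (GaloisField p r) →+* B p r k :=
  (aeval (fun i : Fin k => if i ∈ S then 1 - v p r k i else v p r k i)).toRingHom

lemma ThAux_cond (p r k : ℕ) [Fact p.Prime] (S : Finset (Fin k)) :
    relIdeal p r k ≤ RingHom.ker (ThAux p r k S) := by
  refine Ideal.span_le.mpr ?_
  rintro _ ⟨i, rfl⟩
  simp only [SetLike.mem_coe, RingHom.mem_ker, ThAux, AlgHom.toRingHom_eq_coe,
    RingHom.coe_coe, map_sub, map_pow, aeval_X]
  by_cases h : i ∈ S
  · rw [if_pos h, one_sub_v_idem, sub_self]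
  · rw [if_neg h, v_idem, sub_self]

/-- The automorphism `Θ_S` of `B_k`, determined by `v_i ↦ 1 - v_i` for `i ∈ S` and
`v_i ↦ v_i` otherwise, fixing `F_{p^r}` pointwise. -/
noncomputable def Th (p r k : ℕ) [Fact p.Prime] (S : Finset (Fin k)) :
    B p r k →+* B p r k :=
  Ideal.Quotient.lift (relIdeal p r k) (ThAux p r k S) (fun _ ha => ThAux_cond p r k S ha)

noncomputable def LamAux (p r k : ℕ) [Fact p.Prime] (π : Equiv.Perm (Fin k)) (t : ℕ) :
    MvPolynomial (Fin k) (GaloisField p r) →+* B p r k :=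
  eval₂Hom ((Ideal.Quotient.mk (relIdeal p r k)).comp
      ((C : GaloisField p r →+* MvPolynomial (Fin k) (GaloisField p r)).comp
        (iterateFrobenius (GaloisField p r) p t)))
    (fun i => v p r k (π i))

lemma LamAux_cond (p r k : ℕ) [Fact p.Prime] (π : Equiv.Perm (Fin k)) (t : ℕ) :
    relIdeal p r k ≤ RingHom.ker (LamAux p r k π t) := by
  refine Ideal.span_le.mpr ?_
  rintro _ ⟨i, rfl⟩
  simp only [SetLike.mem_coe, RingHom.mem_ker, LamAux, map_sub, map_pow, eval₂Hom_X']
  rw [v_idem, sub_self]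

/-- The automorphism `Λ_{π,t}` of `B_k`, acting on `F_{p^r}` as the Frobenius power
`α ↦ α^{p^t}` and sending `v_i ↦ v_{π(i)}`. -/
noncomputable def Lam (p r k : ℕ) [Fact p.Prime] (π : Equiv.Perm (Fin k)) (t : ℕ) :
    B p r k →+* B p r k :=
  Ideal.Quotient.lift (relIdeal p r k) (LamAux p r k π t) (fun _ ha => LamAux_cond p r k π t ha)

noncomputable def PhiAux (p r k : ℕ) [Fact p.Prime] :
    MvPolynomial (Fin k) (GaloisField p r) →+* (Fin (2 ^ k) → GaloisField p r) :=
  Pi.ringHom fun j =>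
    eval₂Hom (RingHom.id (GaloisField p r))
      (fun i : Fin k => if Nat.testBit (j : ℕ) (i : ℕ) then 1 else 0)

lemma PhiAux_cond (p r k : ℕ) [Fact p.Prime] :
    relIdeal p r k ≤ RingHom.ker (PhiAux p r k) := by
  refine Ideal.span_le.mpr ?_
  rintro _ ⟨i, rfl⟩
  simp only [SetLike.mem_coe, RingHom.mem_ker, PhiAux]
  funext j
  simp only [Pi.ringHom, RingHom.pi_apply, map_sub, map_pow, eval₂Hom_X']
  by_cases h : Nat.testBit (j : ℕ) (i : ℕ) <;> simp [h]

/-- The Gray map `Φ_k : B_k → F_{p^r}^{2^k}`: the coordinate indexed by `j` is the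
evaluation of (a representative of) an element of `B_k` at the point whose `i`-th
coordinate is the `i`-th binary digit of `j`.  This agrees with the recursive
definition `Φ_k(α + β v_k) = (Φ_{k-1}(α), Φ_{k-1}(α + β))`, `Φ_0 = id`. -/
noncomputable def Phi (p r k : ℕ) [Fact p.Prime] :
    B p r k →+* (Fin (2 ^ k) → GaloisField p r) :=
  Ideal.Quotient.lift (relIdeal p r k) (PhiAux p r k) (fun _ ha => PhiAux_cond p r k ha)

section Aux

variable (p r k : ℕ) [Fact p.Prime]

lemma Phi_mk (f : MvPolynomial (Fin k) (GaloisField p r)) :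
    Phi p r k (Ideal.Quotient.mk _ f) = PhiAux p r k f :=
  Ideal.Quotient.lift_mk _ _ _

lemma v_mul_self (j : Fin k) : v p r k j * v p r k j = v p r k j := by
  have := v_idem p r k j; rwa [sq] at this

lemma Phi_algebraMap (c : GaloisField p r) (i : Fin (2 ^ k)) :
    Phi p r k (algebraMap (GaloisField p r) (B p r k) c) i = c := by
  have : algebraMap (GaloisField p r) (B p r k) c = Ideal.Quotient.mk _ (C c) := rfl
  rw [this, Phi_mk]
  simp [PhiAux, Pi.ringHom, RingHom.pi_apply]

/-- The primitive idempotents of `B_k`. -/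
noncomputable def eIdem (i : Fin (2 ^ k)) : B p r k :=
  ∏ j : Fin k, if Nat.testBit (i : ℕ) (j : ℕ) then v p r k j else 1 - v p r k j

lemma eIdem_mul_v (i : Fin (2 ^ k)) (j : Fin k) :
    eIdem p r k i * v p r k j =
      if Nat.testBit (i : ℕ) (j : ℕ) then eIdem p r k i else 0 := by
  unfold eIdem
  by_cases h : Nat.testBit (i : ℕ) (j : ℕ)
  · rw [if_pos h]
    conv_lhs => rw [← Finset.prod_erase_mul Finset.univ _ (Finset.mem_univ j), mul_assoc,
      if_pos h, v_mul_self]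
    rw [← Finset.prod_erase_mul Finset.univ _ (Finset.mem_univ j), if_pos h]
  · rw [if_neg h]
    conv_lhs => rw [← Finset.prod_erase_mul Finset.univ _ (Finset.mem_univ j), mul_assoc,
      if_neg h]
    rw [sub_mul, one_mul, v_mul_self, sub_self, mul_zero]

lemma eIdem_mul (i : Fin (2 ^ k)) (x : B p r k) :
    eIdem p r k i * x = Phi p r k x i • eIdem p r k i := by
  obtain ⟨f, rfl⟩ := Ideal.Quotient.mk_surjective x
  induction f using MvPolynomial.induction_on with
  | C c =>
      have hc : (Ideal.Quotient.mk (relIdeal p r k)) (C c) =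
          algebraMap (GaloisField p r) (B p r k) c := rfl
      rw [hc, Phi_algebraMap, ← algebraMap_smul (B p r k) c (eIdem p r k i), smul_eq_mul,
        mul_comm]
  | add f g hf hg =>
      rw [map_add, mul_add, hf, hg, map_add, Pi.add_apply, add_smul]
  | mul_X f j hf =>
      have hx : (Ideal.Quotient.mk (relIdeal p r k)) (f * X j) =
          (Ideal.Quotient.mk (relIdeal p r k)) f * v p r k j := rfl
      rw [hx, ← mul_assoc, hf, smul_mul_assoc, eIdem_mul_v, map_mul, Pi.mul_apply]
      have hv : Phi p r k (v p r k j) i =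
          if Nat.testBit (i : ℕ) (j : ℕ) then 1 else 0 := by
        rw [v, Phi_mk]; simp [PhiAux, Pi.ringHom, RingHom.pi_apply]
      rw [hv]
      by_cases h : Nat.testBit (i : ℕ) (j : ℕ) <;> simp [h, mul_smul]

lemma sum_eIdem : ∑ i : Fin (2 ^ k), eIdem p r k i = 1 := by
  classical
  set h : Fin k → Bool → B p r k := fun j b => if b then v p r k j else 1 - v p r k j with hh
  have hb : Function.Bijective (fun (i : Fin (2 ^ k)) (j : Fin k) =>
      Nat.testBit (i : ℕ) (j : ℕ)) := by
    rw [Fintype.bijective_iff_injective_and_card]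
    constructor
    · intro i₁ i₂ hi
      have hfun := congrFun hi
      apply Fin.ext
      apply Nat.eq_of_testBit_eq
      intro m
      by_cases hm : m < k
      · exact hfun ⟨m, hm⟩
      · push_neg at hm
        have h1 : (i₁ : ℕ) < 2 ^ m := lt_of_lt_of_le i₁.isLt (Nat.pow_le_pow_right (by norm_num) hm)
        have h2 : (i₂ : ℕ) < 2 ^ m := lt_of_lt_of_le i₂.isLt (Nat.pow_le_pow_right (by norm_num) hm)
        rw [Nat.testBit_eq_false_of_lt h1, Nat.testBit_eq_false_of_lt h2]
    · simp [Fintype.card_fun]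
  have step1 : ∑ i : Fin (2 ^ k), eIdem p r k i =
      ∑ f : Fin k → Bool, ∏ j : Fin k, h j (f j) := by
    refine Fintype.sum_bijective _ hb _ _ ?_
    intro i
    unfold eIdem
    rfl
  rw [step1, ← Fintype.prod_sum]
  have hone : ∀ j : Fin k, ∑ b : Bool, h j b = 1 := by
    intro j
    rw [Fintype.sum_bool]
    simp only [hh, if_true]
    have : (if (false : Bool) = true then v p r k j else 1 - v p r k j) = 1 - v p r k j := by
      simp
    rw [this]
    ring
  rw [Finset.prod_congr rfl fun j _ => hone j, Finset.prod_const_one]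

end Aux

/-- Second characterization: with `θ = Θ_S ∘ Λ_{π,t}`, `σ_θ` its induced coordinate
permutation and `m = ord(σ_θ)`, a `B_k`-submodule `C` of `B_k^n` is `θ`-cyclic iff
`C = Ψ̄_k^{-1}(C_1, …, C_{2^k})` for `F_{p^r}`-linear codes `C_i` with
`T_{φ^t}(C_i) ⊆ C_{σ_θ(i)}` for all `i`; moreover for any such family, each `C_i` is
closed under `(T_{φ^t})^m`, i.e. each `C_i` is quasi-`φ^{tm}`-cyclic of index `m`. -/
theorem stmt_16 (p r k n : ℕ) [Fact p.Prime] [NeZero n] (hr : 1 ≤ r)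
    (S : Finset (Fin k)) (π : Equiv.Perm (Fin k)) (t : ℕ) (ht : t < r)
    (σ : Equiv.Perm (Fin (2 ^ k)))
    (hσ : ∀ (a : B p r k) (i : Fin (2 ^ k)),
      Phi p r k (Th p r k S (Lam p r k π t a)) i = Phi p r k a (σ.symm i) ^ p ^ t)
    (C : Submodule (B p r k) (Fin n → B p r k)) :
    ((∀ c ∈ C, (fun b : Fin n => Th p r k S (Lam p r k π t (c (b - 1)))) ∈ C) ↔
      ∃ D : Fin (2 ^ k) → Submodule (GaloisField p r) (Fin n → GaloisField p r),
        (C : Set (Fin n → B p r k)) =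
          {a | ∀ i : Fin (2 ^ k), (fun b => Phi p r k (a b) i) ∈ D i} ∧
        ∀ i : Fin (2 ^ k), ∀ c ∈ D i,
          (fun b : Fin n => c (b - 1) ^ p ^ t) ∈ D (σ i)) ∧
    ∀ D : Fin (2 ^ k) → Submodule (GaloisField p r) (Fin n → GaloisField p r),
      (C : Set (Fin n → B p r k)) =
          {a | ∀ i : Fin (2 ^ k), (fun b => Phi p r k (a b) i) ∈ D i} →
      (∀ i : Fin (2 ^ k), ∀ c ∈ D i,
          (fun b : Fin n => c (b - 1) ^ p ^ t) ∈ D (σ i)) →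
      ∀ i : Fin (2 ^ k), ∀ c ∈ D i,
        (fun (y : Fin n → GaloisField p r) (b : Fin n) =>
            y (b - 1) ^ p ^ t)^[orderOf σ] c ∈ D i := by
  classical
  constructor
  · constructor
    · -- forward direction
      intro hcyc
      -- the coordinate projection linear maps
      let L : Fin (2 ^ k) → (Fin n → B p r k) →ₗ[GaloisField p r] (Fin n → GaloisField p r) :=
        fun i =>
          { toFun := fun a b => Phi p r k (a b) i
            map_add' := by intro a b; funext b'; simp
            map_smul' := by
              intro c a
              funext b'
              simp only [Pi.smul_apply, RingHom.id_apply]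
              rw [← algebraMap_smul (B p r k) c (a b'), smul_eq_mul, map_mul, Pi.mul_apply,
                Phi_algebraMap]
              simp }
      refine ⟨fun i => Submodule.map (L i) (C.restrictScalars (GaloisField p r)), ?_, ?_⟩
      · ext a
        simp only [Set.mem_setOf_eq, SetLike.mem_coe]
        constructor
        · intro ha i
          exact ⟨a, ha, rfl⟩
        · intro ha
          choose g hg1 hg2 using ha
          have key : a = ∑ i : Fin (2 ^ k), eIdem p r k i • g i := by
            funext b
            have hsum : (∑ i : Fin (2 ^ k), eIdem p r k i • g i) b =
                ∑ i : Fin (2 ^ k), eIdem p r k i * g i b := by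
              rw [Finset.sum_apply]
              simp [smul_eq_mul]
            rw [hsum]
            have heach : ∀ i : Fin (2 ^ k), eIdem p r k i * g i b = eIdem p r k i * a b := by
              intro i
              rw [eIdem_mul, eIdem_mul]
              congr 1
              exact congrFun (hg2 i) b
            rw [Finset.sum_congr rfl (fun i _ => heach i), ← Finset.sum_mul,
              sum_eIdem, one_mul]
          rw [key]
          exact Submodule.sum_mem C (fun i _ => Submodule.smul_mem C _ (hg1 i))
      · rintro i _ ⟨a, ha, rfl⟩
        refine ⟨fun b => Th p r k S (Lam p r k π t (a (b - 1))), hcyc a ha, ?_⟩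
        funext b
        simp only [L, LinearMap.coe_mk, AddHom.coe_mk]
        rw [hσ, Equiv.symm_apply_apply]
    · -- reverse direction
      rintro ⟨D, hC, hD⟩ c hc
      have hc' : ∀ i : Fin (2 ^ k), (fun b => Phi p r k (c b) i) ∈ D i := by
        have := hC ▸ (show c ∈ (C : Set (Fin n → B p r k)) from hc)
        exact this
      have hgoal : ∀ i : Fin (2 ^ k),
          (fun b => Phi p r k (Th p r k S (Lam p r k π t (c (b - 1)))) i) ∈ D i := by
        intro i
        have h1 := hD (σ.symm i) _ (hc' (σ.symm i))
        rw [Equiv.apply_symm_apply] at h1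
        have h2 : (fun b : Fin n => Phi p r k (c (b - 1)) (σ.symm i) ^ p ^ t) =
            (fun b : Fin n => Phi p r k (Th p r k S (Lam p r k π t (c (b - 1)))) i) := by
          funext b
          rw [hσ]
        rwa [h2] at h1
      have : (fun b : Fin n => Th p r k S (Lam p r k π t (c (b - 1)))) ∈
          (C : Set (Fin n → B p r k)) := by
        rw [hC]
        exact hgoal
      exact this
  · -- quasi-cyclic part
    intro D _ hD i c hc
    have key : ∀ j : ℕ,
        (fun (y : Fin n → GaloisField p r) (b : Fin n) => y (b - 1) ^ p ^ t)^[j] c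
          ∈ D ((σ ^ j) i) := by
      intro j
      induction j with
      | zero => simpa using hc
      | succ j ih =>
          rw [Function.iterate_succ_apply']
          have := hD _ _ ih
          have hperm : σ ((σ ^ j) i) = (σ ^ (j + 1)) i := by
            rw [pow_succ']
            rfl
          rwa [hperm] at this
    have := key (orderOf σ)
    rwa [pow_orderOf_eq_one σ, Equiv.Perm.one_apply] at this
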